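/- Let v ≠ s be a vertex such that d(x) ≥ u ≥ p(v) for every descendant x of v in the spanning tree T, where u is some vertex with u ≥ p(v) in a bottom-up numbering. Then v dominates no vertex other than itself; that is, v is a leaf of the dominator tree. -/

import Mathlib

universe u

variable {V : Type u}

attribute [local instance] Classical.propDecidable

/-- A flow graph: a directed graph with arc relation `A` and start vertex `s`. -/
structure FlowGraph (V : Type u) where
  A : V → V → Prop
  s : V

namespace FlowGraph

/-- `p` is a (directed) path from `a` to `b`: a nonempty list of vertices starting at `a`,
ending at `b`, with consecutive vertices joined by arcs. -/
def IsPath (G : FlowGraph V) (p : List V) (a b : V) : Prop :=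
  p ≠ [] ∧ p.head? = some a ∧ p.getLast? = some b ∧ p.Chain' G.A

def Reach (G : FlowGraph V) (a b : V) : Prop := ∃ p, G.IsPath p a b

/-- `u` dominates `v`: every path from the start vertex `s` to `v` contains `u`. -/
def Dom (G : FlowGraph V) (u v : V) : Prop :=
  ∀ p, G.IsPath p G.s v → u ∈ p

/-- Acyclic: no cycle of more than one vertex, i.e. no two distinct mutually reachable
vertices. -/
def Acyclic (G : FlowGraph V) : Prop :=
  ∀ a b, a ≠ b → ¬ (G.Reach a b ∧ G.Reach b a)

/-- A spanning tree of `G` rooted at `s`, given by a parent function: every non-root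
vertex has a tree arc from its parent, and the parent chain of every vertex reaches `s`. -/
structure SpanningTree (G : FlowGraph V) where
  parent : V → V
  parent_arc : ∀ v, v ≠ G.s → G.A (parent v) v
  parent_root : parent G.s = G.s
  root_reach : ∀ v, Relation.ReflTransGen (fun a b => parent a = b) v G.s

/-- `u` is an ancestor of `v` in the tree `T` (reflexively). -/
def Anc {G : FlowGraph V} (T : SpanningTree G) (u v : V) : Prop :=
  Relation.ReflTransGen (fun a b => T.parent a = b) v u

/-- Replace occurrences of `v` by `x`. -/
noncomputable def repl (v x a : V) : V := if a = v then x else a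

/-- Contraction of vertex `v` into vertex `x`: every arc end equal to `v` is replaced by `x`. -/
noncomputable def contract (G : FlowGraph V) (v x : V) : FlowGraph V where
  A a b := ∃ a' b', G.A a' b' ∧ a = repl v x a' ∧ b = repl v x b'
  s := G.s

/-- `x ∈ loop(u)`: `x` is a descendant of `u` in `T` with a path from `x` to `u` in `G`
containing only descendants of `u` in `T`. -/
def InLoop (G : FlowGraph V) (T : SpanningTree G) (u x : V) : Prop :=
  Anc T u x ∧ ∃ p, G.IsPath p x u ∧ ∀ y ∈ p, Anc T u y

/-- `d` is an immediate-dominator function for `G`: for each `v ≠ s`, `d v ≠ v` is a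
dominator of `v` and every dominator of `v` other than `v` itself dominates `d v`. -/
def IsIdom (G : FlowGraph V) (d : V → V) : Prop :=
  ∀ v, v ≠ G.s → d v ≠ v ∧ G.Dom (d v) v ∧
    ∀ u, G.Dom u v → u ≠ v → G.Dom u (d v)

end FlowGraph

open FlowGraph

/-- Ancestors have larger numbers in a bottom-up numbering. -/
lemma anc_le [LinearOrder V] {G : FlowGraph V} (T : SpanningTree G)
    (hbu : ∀ x, x ≠ G.s → x < T.parent x) {a b : V} (h : Anc T a b) : b ≤ a := by
  induction h with
  | refl => exact le_rfl
  | tail _ hcd ih =>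
    rename_i c e _
    have hce : c ≤ e := by
      by_cases hc : c = G.s
      · subst hc; rw [T.parent_root] at hcd; exact hcd.le
      · exact hcd ▸ (hbu c hc).le
    exact le_trans ih hce

/-- There is a tree path from the root to any vertex, all of whose members are
ancestors of that vertex. -/
lemma tree_path {G : FlowGraph V} (T : SpanningTree G) (w : V) :
    ∃ l, G.IsPath l G.s w ∧ ∀ y ∈ l, Anc T y w := by
  have base : ∃ l, G.IsPath l G.s G.s ∧ ∀ y ∈ l, Anc T y G.s := by
    refine ⟨[G.s], ⟨by simp, by simp, by simp, List.isChain_singleton _⟩, ?_⟩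
    intro y hy; simp at hy; subst hy; exact Relation.ReflTransGen.refl
  induction (T.root_reach w) using Relation.ReflTransGen.head_induction_on with
  | refl => exact base
  | head hab _ ih =>
    rename_i a b _
    by_cases ha : a = G.s
    · subst ha; exact base
    · obtain ⟨l, ⟨hne, hhd, hlast, hch⟩, hanc⟩ := ih
      refine ⟨l ++ [a], ⟨by simp [hne], ?_, by simp, ?_⟩, ?_⟩
      · rwa [List.head?_append_of_ne_nil _ hne]
      · refine List.isChain_append.mpr ?_
        refine ⟨hch, by simp, ?_⟩
        intro x hx y hy
        simp [List.head?] at hy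
        rw [hlast] at hx; simp at hx; subst hx; subst hy
        exact hab ▸ T.parent_arc a ha
      · intro y hy
        rcases List.mem_append.mp hy with h | h
        · exact Relation.ReflTransGen.head hab (hanc y h)
        · simp at h; subst h; exact Relation.ReflTransGen.refl

/-- If `v` dominates `w`, then `v` is a tree ancestor of `w`. -/
lemma dom_anc {G : FlowGraph V} (T : SpanningTree G) {v w : V}
    (h : G.Dom v w) : Anc T v w := by
  obtain ⟨l, hl, hanc⟩ := tree_path T w
  exact hanc v (h l hl)

/-- If `d x ≥ u ≥ p v` for every descendant `x` of `v` in `T`, then `v` dominates no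
vertex other than itself (it is a leaf of the dominator tree). -/
theorem stmt5 [LinearOrder V] (G : FlowGraph V) (T : SpanningTree G)
    (hreach : ∀ v, G.Reach G.s v)
    (hbu : ∀ x, x ≠ G.s → x < T.parent x)
    (d : V → V) (hd : G.IsIdom d)
    (v : V) (hv : v ≠ G.s)
    (u : V) (hup : T.parent v ≤ u)
    (hdesc : ∀ x, Anc T v x → x ≠ G.s → u ≤ d x) :
    ∀ w, G.Dom v w → w = v := by
  intro w hdom
  by_contra hwv
  -- w ≠ s, else v = s
  have hws : w ≠ G.s := by
    intro h; subst h
    have : v ∈ [G.s] := hdom [G.s] ⟨by simp, by simp, by simp, List.isChain_singleton _⟩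
    simp at this; exact hv this
  -- v is a tree ancestor of w
  have hanc : Anc T v w := dom_anc T hdom
  -- u ≤ d w
  have hud : u ≤ d w := hdesc w hanc hws
  obtain ⟨_, _, hmax⟩ := hd w hws
  have hvd : G.Dom v (d w) := hmax v hdom (Ne.symm hwv)
  have hancd : Anc T v (d w) := dom_anc T hvd
  have hdv : d w ≤ v := anc_le T hbu hancd
  have : v < T.parent v := hbu v hv
  exact absurd (le_trans hup (le_trans hud hdv)) (not_le.mpr this)
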